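/- For every n ≥ 1 and every (i_0,…,i_n) ∈ ω_n, the weight subgraph G(i_0,…,i_n) of G_n is connected. Moreover, if 0 ≤ s < t ≤ n and both (i_0,…,i_s,…,i_t,…,i_n) and (i_0,…,i_s+1,…,i_t−1,…,i_n) belong to ω_n, then there exists an array a of weight (i_0,…,i_n) with a_{s,t} = 0; the array obtained from a by changing its (s,t) entry to 1 then has weight (i_0,…,i_s+1,…,i_t−1,…,i_n). -/

import Mathlib

/-- `UT n`: strictly upper triangular 0-1 arrays `(a_{i,j})_{0 ≤ i < j ≤ n}`,
encoded as functions on `Fin (n+1) × Fin (n+1)` vanishing off the region `i < j`. -/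
def UT (n : ℕ) : Type :=
  {a : Fin (n + 1) → Fin (n + 1) → ℤ //
    ∀ i j : Fin (n + 1), (i < j → a i j = 0 ∨ a i j = 1) ∧ (¬ i < j → a i j = 0)}

/-- Adjacency in `G_n`: `a` and `b` differ exactly on a triple of positions
`(i,j), (j,l), (i,l)` with `i < j < l`, where one of them has entries `1, 1, 0` and
the other `0, 0, 1`. -/
def UTAdj {n : ℕ} (a b : UT n) : Prop :=
  ∃ i j l : Fin (n + 1), i < j ∧ j < l ∧
    ((a.1 i j = 1 ∧ a.1 j l = 1 ∧ a.1 i l = 0 ∧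
        b.1 i j = 0 ∧ b.1 j l = 0 ∧ b.1 i l = 1) ∨
      (b.1 i j = 1 ∧ b.1 j l = 1 ∧ b.1 i l = 0 ∧
        a.1 i j = 0 ∧ a.1 j l = 0 ∧ a.1 i l = 1)) ∧
    ∀ s t : Fin (n + 1),
      ¬ ((s = i ∧ t = j) ∨ (s = j ∧ t = l) ∨ (s = i ∧ t = l)) → a.1 s t = b.1 s t

/-- The weight of an array: `w_s(a) = ∑_{k<s} (1 - a_{k,s}) + ∑_{k>s} a_{s,k}`. -/
def UTweight {n : ℕ} (a : UT n) : Fin (n + 1) → ℤ := fun s =>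
  (∑ k : Fin (n + 1), if k < s then 1 - a.1 k s else 0) +
    ∑ k : Fin (n + 1), if s < k then a.1 s k else 0

/-- Membership in `ω_n`: the tuple sums to `0 + 1 + ⋯ + n` and every subset of the
entries sums to at least `0 + 1 + ⋯ + (s-1)` where `s` is the size of the subset. -/
def InOmega {n : ℕ} (c : Fin (n + 1) → ℤ) : Prop :=
  (∑ k : Fin (n + 1), c k = ∑ k : Fin (n + 1), (k : ℤ)) ∧
    ∀ s : Finset (Fin (n + 1)), (∑ t ∈ Finset.range s.card, (t : ℤ)) ≤ ∑ k ∈ s, c k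

/-- The array obtained from `a` by setting the entry at position `(s,t)` (with `s < t`)
to `1`. -/
def UTset {n : ℕ} (a : UT n) (s t : Fin (n + 1)) : UT n :=
  ⟨fun i j => if i = s ∧ j = t ∧ s < t then 1 else a.1 i j, by
    intro i j
    constructor
    · intro hij
      by_cases h : i = s ∧ j = t ∧ s < t
      · simp [h]
      · simp only [if_neg h]; exact (a.2 i j).1 hij
    · intro hij
      have h : ¬ (i = s ∧ j = t ∧ s < t) := by
        rintro ⟨rfl, rfl, hst⟩; exact hij hst
      simp only [if_neg h]; exact (a.2 i j).2 hij⟩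



open Finset

variable {n : ℕ}


lemma entry01 (a : UT n) (p q : Fin (n+1)) : a.1 p q = 0 ∨ a.1 p q = 1 := by
  by_cases h : p < q
  · exact (a.2 p q).1 h
  · exact Or.inl ((a.2 p q).2 h)

/-- The arc relation of the tournament. -/
def Arc {n : ℕ} (a : UT n) (x y : Fin (n+1)) : Prop :=
  (x < y ∧ a.1 x y = 1) ∨ (y < x ∧ a.1 y x = 0)

instance {n : ℕ} (a : UT n) (x y : Fin (n+1)) : Decidable (Arc a x y) := by
  unfold Arc; infer_instance

lemma arc_irrefl (a : UT n) (x : Fin (n+1)) : ¬ Arc a x x := by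
  rintro (⟨h, -⟩ | ⟨h, -⟩) <;> exact lt_irrefl _ h

lemma arc_asymm (a : UT n) {x y : Fin (n+1)} : Arc a x y → Arc a y x → False := by
  rintro (⟨h1, e1⟩ | ⟨h1, e1⟩) (⟨h2, e2⟩ | ⟨h2, e2⟩)
  · exact absurd (h1.trans h2) (lt_irrefl _)
  · rw [e1] at e2; norm_num at e2
  · rw [e1] at e2; norm_num at e2
  · exact absurd (h1.trans h2) (lt_irrefl _)

lemma arc_total (a : UT n) {x y : Fin (n+1)} (h : x ≠ y) : Arc a x y ∨ Arc a y x := by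
  rcases lt_or_gt_of_ne h with hl | hl
  · rcases (a.2 x y).1 hl with h0 | h1
    · exact Or.inr (Or.inr ⟨hl, h0⟩)
    · exact Or.inl (Or.inl ⟨hl, h1⟩)
  · rcases (a.2 y x).1 hl with h0 | h1
    · exact Or.inl (Or.inr ⟨hl, h0⟩)
    · exact Or.inr (Or.inl ⟨hl, h1⟩)

lemma arc_ne (a : UT n) {x y : Fin (n+1)} (h : Arc a x y) : x ≠ y := by
  rintro rfl; exact arc_irrefl a x h

/-- The weight is the out-degree. -/
lemma weight_eq_sum_arc (a : UT n) (v : Fin (n+1)) :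
    UTweight a v = ∑ k : Fin (n+1), (if Arc a v k then (1:ℤ) else 0) := by
  classical
  rw [UTweight, ← Finset.sum_add_distrib]
  refine Finset.sum_congr rfl (fun k _ => ?_)
  rcases lt_trichotomy k v with h | h | h
  · rw [if_pos h, if_neg (asymm h)]
    rcases (a.2 k v).1 h with h0 | h1
    · rw [if_pos (show Arc a v k from Or.inr ⟨h, h0⟩), h0]; ring
    · rw [if_neg, h1]; · ring
      rintro (⟨hc, -⟩ | ⟨-, hc⟩)
      · exact absurd (h.trans hc) (lt_irrefl _)
      · rw [h1] at hc; norm_num at hc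
  · subst h
    rw [if_neg (lt_irrefl _), if_neg (lt_irrefl _), if_neg (arc_irrefl a k)]; ring
  · rw [if_neg (asymm h), if_pos h]
    rcases (a.2 v k).1 h with h0 | h1
    · rw [if_neg, h0]; · ring
      rintro (⟨-, hc⟩ | ⟨hc, -⟩)
      · rw [h0] at hc; norm_num at hc
      · exact absurd (h.trans hc) (lt_irrefl _)
    · rw [if_pos (show Arc a v k from Or.inl ⟨h, h1⟩), h1]; ring

/-- Patch array `a` with the value of `b` at position `P`. -/
def UTover {n : ℕ} (a b : UT n) (P : Fin (n+1) × Fin (n+1)) : UT n :=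
  ⟨fun i j => if (i, j) = P then b.1 i j else a.1 i j, by
    intro i j
    constructor
    · intro hij
      dsimp only
      split
      · exact (b.2 i j).1 hij
      · exact (a.2 i j).1 hij
    · intro hij
      dsimp only
      split
      · exact (b.2 i j).2 hij
      · exact (a.2 i j).2 hij⟩

def wdelta {n : ℕ} (v p q : Fin (n+1)) : ℤ :=
  (if v = p then (1:ℤ) else 0) - (if v = q then 1 else 0)

lemma weight_congr_single (a b : UT n) {p q : Fin (n+1)} (hpq : p < q)
    (hoff : ∀ i j : Fin (n+1), ¬(i = p ∧ j = q) → b.1 i j = a.1 i j) (v : Fin (n+1)) :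
    UTweight b v = UTweight a v + (b.1 p q - a.1 p q) * wdelta v p q := by
  have hpq' : p ≠ q := ne_of_lt hpq
  have key : ∀ k : Fin (n+1),
      ((if k < v then 1 - b.1 k v else 0) + (if v < k then b.1 v k else 0))
      = ((if k < v then 1 - a.1 k v else 0) + (if v < k then a.1 v k else 0)) +
        (b.1 p q - a.1 p q) *
          ((if v = p ∧ k = q then (1:ℤ) else 0) - (if k = p ∧ v = q then 1 else 0)) := by
    intro k
    by_cases h1 : k = p ∧ v = q
    · obtain ⟨rfl, rfl⟩ := h1
      simp only [if_pos hpq, if_neg (asymm hpq),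
        if_neg (show ¬(v = k ∧ k = v) from fun h => hpq' h.1.symm),
        if_pos (show k = k ∧ v = v from ⟨rfl, rfl⟩)]
      norm_num
    · by_cases h2 : v = p ∧ k = q
      · obtain ⟨rfl, rfl⟩ := h2
        simp only [if_neg (asymm hpq), if_pos hpq,
          if_pos (show v = v ∧ k = k from ⟨rfl, rfl⟩),
          if_neg (show ¬(k = v ∧ v = k) from fun h => hpq' h.2)]
        norm_num
      · rw [hoff k v h1, hoff v k h2, if_neg h2, if_neg h1]
        ring
  have S : ∑ k : Fin (n+1),
      ((if v = p ∧ k = q then (1:ℤ) else 0) - (if k = p ∧ v = q then 1 else 0))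
      = wdelta v p q := by
    rw [Finset.sum_sub_distrib, wdelta]
    congr 1
    · by_cases hv : v = p
      · simp [hv]
      · simp [hv]
    · by_cases hv : v = q
      · simp [hv]
      · simp [hv]
  calc UTweight b v
      = ∑ k : Fin (n+1), ((if k < v then 1 - b.1 k v else 0) + (if v < k then b.1 v k else 0)) := by
        rw [UTweight, ← Finset.sum_add_distrib]
    _ = ∑ k : Fin (n+1), (((if k < v then 1 - a.1 k v else 0) + (if v < k then a.1 v k else 0)) +
        (b.1 p q - a.1 p q) *
          ((if v = p ∧ k = q then (1:ℤ) else 0) - (if k = p ∧ v = q then 1 else 0))) :=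
        Finset.sum_congr rfl (fun k _ => key k)
    _ = (∑ k : Fin (n+1), ((if k < v then 1 - a.1 k v else 0) + (if v < k then a.1 v k else 0))) +
        (b.1 p q - a.1 p q) * ∑ k : Fin (n+1),
          ((if v = p ∧ k = q then (1:ℤ) else 0) - (if k = p ∧ v = q then 1 else 0)) := by
        rw [Finset.sum_add_distrib, Finset.mul_sum]
    _ = UTweight a v + (b.1 p q - a.1 p q) * wdelta v p q := by
        rw [S, UTweight, ← Finset.sum_add_distrib]

lemma UTover_apply (a b : UT n) (P : Fin (n+1) × Fin (n+1)) (i j : Fin (n+1)) :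
    (UTover a b P).1 i j = if (i, j) = P then b.1 i j else a.1 i j := rfl

lemma weight_congr₃ (a b : UT n) {p₁ q₁ p₂ q₂ p₃ q₃ : Fin (n+1)}
    (h₁ : p₁ < q₁) (h₂ : p₂ < q₂) (h₃ : p₃ < q₃)
    (d12 : (p₁, q₁) ≠ (p₂, q₂)) (d13 : (p₁, q₁) ≠ (p₃, q₃)) (d23 : (p₂, q₂) ≠ (p₃, q₃))
    (hoff : ∀ i j : Fin (n+1), ¬(i = p₁ ∧ j = q₁) → ¬(i = p₂ ∧ j = q₂) → ¬(i = p₃ ∧ j = q₃) →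
      b.1 i j = a.1 i j) (v : Fin (n+1)) :
    UTweight b v = UTweight a v + (b.1 p₁ q₁ - a.1 p₁ q₁) * wdelta v p₁ q₁
      + (b.1 p₂ q₂ - a.1 p₂ q₂) * wdelta v p₂ q₂
      + (b.1 p₃ q₃ - a.1 p₃ q₃) * wdelta v p₃ q₃ := by
  set c₁ := UTover a b (p₁, q₁) with hc₁
  set c₂ := UTover c₁ b (p₂, q₂) with hc₂
  have e1 : ∀ i j : Fin (n+1), ¬(i = p₁ ∧ j = q₁) → c₁.1 i j = a.1 i j := by
    intro i j h
    rw [UTover_apply, if_neg (fun hc => h (Prod.mk.injEq .. ▸ hc))]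
  have e2 : ∀ i j : Fin (n+1), ¬(i = p₂ ∧ j = q₂) → c₂.1 i j = c₁.1 i j := by
    intro i j h
    rw [UTover_apply, if_neg (fun hc => h (Prod.mk.injEq .. ▸ hc))]
  have e3 : ∀ i j : Fin (n+1), ¬(i = p₃ ∧ j = q₃) → b.1 i j = c₂.1 i j := by
    intro i j h
    by_cases hP2 : (i, j) = (p₂, q₂)
    · rw [hc₂, UTover_apply, if_pos hP2]
    · by_cases hP1 : (i, j) = (p₁, q₁)
      · rw [hc₂, UTover_apply, if_neg hP2, hc₁, UTover_apply, if_pos hP1]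
      · rw [e2 i j (fun hc => hP2 (by rw [hc.1, hc.2])), e1 i j
          (fun hc => hP1 (by rw [hc.1, hc.2]))]
        exact hoff i j (fun hc => hP1 (by rw [hc.1, hc.2]))
          (fun hc => hP2 (by rw [hc.1, hc.2])) h
  have w1 := weight_congr_single a c₁ h₁ (by intro i j h; exact e1 i j h) v
  have w2 := weight_congr_single c₁ c₂ h₂ (by intro i j h; exact e2 i j h) v
  have w3 := weight_congr_single c₂ b h₃ (by intro i j h; exact e3 i j h) v
  have v11 : c₁.1 p₁ q₁ = b.1 p₁ q₁ := by rw [hc₁, UTover_apply, if_pos rfl]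
  have v22 : c₂.1 p₂ q₂ = b.1 p₂ q₂ := by rw [hc₂, UTover_apply, if_pos rfl]
  have v12 : c₂.1 p₁ q₁ = c₁.1 p₁ q₁ := e2 p₁ q₁ (fun hc => d12 (by rw [hc.1, hc.2]))
  have v13 : c₁.1 p₂ q₂ = a.1 p₂ q₂ := e1 p₂ q₂ (fun hc => d12 (by rw [hc.1, hc.2]))
  have v23 : c₂.1 p₃ q₃ = c₁.1 p₃ q₃ := e2 p₃ q₃ (fun hc => d23 (by rw [hc.1, hc.2]))
  have v33 : c₁.1 p₃ q₃ = a.1 p₃ q₃ := e1 p₃ q₃ (fun hc => d13 (by rw [hc.1, hc.2]))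
  rw [w3, w2, w1, v22, v13, v23, v33, v11]


lemma UTAdj.symm' {a b : UT n} (h : UTAdj a b) : UTAdj b a := by
  obtain ⟨i, j, l, hij, hjl, hpat, hoff⟩ := h
  exact ⟨i, j, l, hij, hjl, hpat.symm, fun s t ht => (hoff s t ht).symm⟩

lemma UTAdj.weight_eq {a b : UT n} (h : UTAdj a b) : UTweight b = UTweight a := by
  obtain ⟨i, j, l, hij, hjl, hpat, hoff⟩ := h
  have hil : i < l := hij.trans hjl
  have d12 : (i, j) ≠ (j, l) := fun hc => absurd ((Prod.mk.injEq ..).mp hc).1 (ne_of_lt hij)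
  have d13 : (i, j) ≠ (i, l) := fun hc => absurd ((Prod.mk.injEq ..).mp hc).2 (ne_of_lt hjl)
  have d23 : (j, l) ≠ (i, l) := fun hc => absurd ((Prod.mk.injEq ..).mp hc).1 (ne_of_gt hij)
  have hoff' : ∀ s t : Fin (n+1), ¬(s = i ∧ t = j) → ¬(s = j ∧ t = l) → ¬(s = i ∧ t = l) →
      b.1 s t = a.1 s t := by
    intro s t h1 h2 h3
    exact (hoff s t (by tauto)).symm
  funext v
  have w := weight_congr₃ a b hij hjl hil d12 d13 d23 hoff' v
  rcases hpat with ⟨e1, e2, e3, e4, e5, e6⟩ | ⟨e1, e2, e3, e4, e5, e6⟩ <;>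
    · rw [w, e1, e2, e3, e4, e5, e6, wdelta, wdelta, wdelta]
      ring

/-- Toggle the entry at position `(p,q)` (when `p < q`). -/
def UTflip {n : ℕ} (a : UT n) (p q : Fin (n+1)) : UT n :=
  ⟨fun i j => if i = p ∧ j = q ∧ p < q then 1 - a.1 p q else a.1 i j, by
    intro i j
    constructor
    · intro hij
      dsimp only
      split
      · rcases entry01 a p q with h | h <;> rw [h] <;> norm_num
      · exact (a.2 i j).1 hij
    · intro hij
      dsimp only
      rw [if_neg (fun hc : i = p ∧ j = q ∧ p < q => hij (hc.1 ▸ hc.2.1 ▸ hc.2.2))]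
      exact (a.2 i j).2 hij⟩

lemma UTflip_same (a : UT n) {p q : Fin (n+1)} (h : p < q) :
    (UTflip a p q).1 p q = 1 - a.1 p q := by
  show (if _ then _ else _) = _
  rw [if_pos ⟨rfl, rfl, h⟩]

lemma UTflip_ne (a : UT n) {p q i j : Fin (n+1)} (h : ¬(i = p ∧ j = q)) :
    (UTflip a p q).1 i j = a.1 i j := by
  show (if _ then _ else _) = _
  rw [if_neg (fun hc : i = p ∧ j = q ∧ p < q => h ⟨hc.1, hc.2.1⟩)]

lemma UTflip_weight (a : UT n) {p q : Fin (n+1)} (h : p < q) (v : Fin (n+1)) :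
    UTweight (UTflip a p q) v = UTweight a v + (1 - 2 * a.1 p q) * wdelta v p q := by
  have := weight_congr_single a (UTflip a p q) h
    (fun i j hij => UTflip_ne a hij) v
  rw [this, UTflip_same a h]
  ring

lemma arc_congr {a b : UT n} {x y : Fin (n+1)} (h1 : x < y → b.1 x y = a.1 x y)
    (h2 : y < x → b.1 y x = a.1 y x) : Arc b x y ↔ Arc a x y := by
  constructor <;> rintro (⟨hl, he⟩ | ⟨hl, he⟩)
  · exact Or.inl ⟨hl, (h1 hl).symm.trans he⟩
  · exact Or.inr ⟨hl, (h2 hl).symm.trans he⟩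
  · exact Or.inl ⟨hl, (h1 hl).trans he⟩
  · exact Or.inr ⟨hl, (h2 hl).trans he⟩

/-- sorted pair -/
def sp {n : ℕ} (x y : Fin (n+1)) : Fin (n+1) × Fin (n+1) := if x < y then (x, y) else (y, x)

lemma sp_or (x y : Fin (n+1)) : sp x y = (x, y) ∨ sp x y = (y, x) := by
  rw [sp]; split <;> simp

lemma sp_comm {x y : Fin (n+1)} (h : x ≠ y) : sp x y = sp y x := by
  rcases lt_or_gt_of_ne h with hl | hl
  · rw [sp, sp, if_pos hl, if_neg (asymm hl)]
  · rw [sp, sp, if_neg (asymm hl), if_pos hl]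

lemma sp_lt {x y : Fin (n+1)} (h : x ≠ y) : (sp x y).1 < (sp x y).2 := by
  rcases lt_or_gt_of_ne h with hl | hl
  · rw [sp, if_pos hl]; exact hl
  · rw [sp, if_neg (asymm hl)]; exact hl

lemma sp_ne {x y z w : Fin (n+1)} (hxy : x ≠ y) (h1 : x ≠ z ∨ y ≠ w) (h2 : x ≠ w ∨ y ≠ z) :
    sp x y ≠ sp z w := by
  rcases sp_or x y with h | h <;> rcases sp_or z w with h' | h' <;> rw [h, h'] <;>
    intro hc <;> rw [Prod.mk.injEq] at hc <;> obtain ⟨hc1, hc2⟩ := hc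
  · rcases h1 with hne | hne
    · exact hne hc1
    · exact hne hc2
  · rcases h2 with hne | hne
    · exact hne hc1
    · exact hne hc2
  · rcases h2 with hne | hne
    · exact hne hc2
    · exact hne hc1
  · rcases h1 with hne | hne
    · exact hne hc2
    · exact hne hc1

lemma reverse3_ordered (a : UT n) {x y z : Fin (n+1)} (hxy : x < y) (hyz : y < z)
    (exy : a.1 x y = 1) (eyz : a.1 y z = 1) (exz : a.1 x z = 0) :
    ∃ a' : UT n, UTAdj a a' ∧ a'.1 x y = 0 ∧ a'.1 y z = 0 ∧ a'.1 x z = 1 ∧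
      (∀ p q : Fin (n+1), ¬(p = x ∧ q = y) → ¬(p = y ∧ q = z) → ¬(p = x ∧ q = z) →
        a'.1 p q = a.1 p q) := by
  have hxz : x < z := hxy.trans hyz
  have hxy' : x ≠ y := ne_of_lt hxy
  have hyz' : y ≠ z := ne_of_lt hyz
  have hxz' : x ≠ z := ne_of_lt hxz
  set a₁ := UTflip a x y with ha₁
  set a₂ := UTflip a₁ y z with ha₂
  set a₃ := UTflip a₂ x z with ha₃
  have e1 : a₃.1 x y = 0 := by
    rw [ha₃, UTflip_ne _ (fun h : x = x ∧ y = z => hyz' h.2), ha₂,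
      UTflip_ne _ (fun h : x = y ∧ y = z => hxy' h.1), ha₁, UTflip_same _ hxy, exy]
    norm_num
  have e2 : a₃.1 y z = 0 := by
    rw [ha₃, UTflip_ne _ (fun h : y = x ∧ z = z => hxy' h.1.symm), ha₂, UTflip_same _ hyz,
      ha₁, UTflip_ne _ (fun h : y = x ∧ z = y => hxy' h.1.symm), eyz]
    norm_num
  have e3 : a₃.1 x z = 1 := by
    rw [ha₃, UTflip_same _ hxz, ha₂, UTflip_ne _ (fun h : x = y ∧ z = z => hxy' h.1), ha₁,
      UTflip_ne _ (fun h : x = x ∧ z = y => hyz' h.2.symm), exz]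
    norm_num
  have eoff : ∀ p q : Fin (n+1), ¬(p = x ∧ q = y) → ¬(p = y ∧ q = z) → ¬(p = x ∧ q = z) →
      a₃.1 p q = a.1 p q := by
    intro p q h1 h2 h3
    rw [ha₃, UTflip_ne _ h3, ha₂, UTflip_ne _ h2, ha₁, UTflip_ne _ h1]
  refine ⟨a₃, ⟨x, y, z, hxy, hyz, Or.inl ⟨exy, eyz, exz, e1, e2, e3⟩, ?_⟩, e1, e2, e3, eoff⟩
  intro s t h
  exact (eoff s t (fun hc => h (Or.inl hc)) (fun hc => h (Or.inr (Or.inl hc)))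
    (fun hc => h (Or.inr (Or.inr hc)))).symm

lemma reverse3_ordered' (a : UT n) {x y z : Fin (n+1)} (hxy : x < y) (hyz : y < z)
    (exy : a.1 x y = 0) (eyz : a.1 y z = 0) (exz : a.1 x z = 1) :
    ∃ a' : UT n, UTAdj a a' ∧ a'.1 x y = 1 ∧ a'.1 y z = 1 ∧ a'.1 x z = 0 ∧
      (∀ p q : Fin (n+1), ¬(p = x ∧ q = y) → ¬(p = y ∧ q = z) → ¬(p = x ∧ q = z) →
        a'.1 p q = a.1 p q) := by
  have hxz : x < z := hxy.trans hyz
  have hxy' : x ≠ y := ne_of_lt hxy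
  have hyz' : y ≠ z := ne_of_lt hyz
  have hxz' : x ≠ z := ne_of_lt hxz
  set a₁ := UTflip a x y with ha₁
  set a₂ := UTflip a₁ y z with ha₂
  set a₃ := UTflip a₂ x z with ha₃
  have e1 : a₃.1 x y = 1 := by
    rw [ha₃, UTflip_ne _ (fun h : x = x ∧ y = z => hyz' h.2), ha₂,
      UTflip_ne _ (fun h : x = y ∧ y = z => hxy' h.1), ha₁, UTflip_same _ hxy, exy]
    norm_num
  have e2 : a₃.1 y z = 1 := by
    rw [ha₃, UTflip_ne _ (fun h : y = x ∧ z = z => hxy' h.1.symm), ha₂, UTflip_same _ hyz,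
      ha₁, UTflip_ne _ (fun h : y = x ∧ z = y => hxy' h.1.symm), eyz]
    norm_num
  have e3 : a₃.1 x z = 0 := by
    rw [ha₃, UTflip_same _ hxz, ha₂, UTflip_ne _ (fun h : x = y ∧ z = z => hxy' h.1), ha₁,
      UTflip_ne _ (fun h : x = x ∧ z = y => hyz' h.2.symm), exz]
    norm_num
  have eoff : ∀ p q : Fin (n+1), ¬(p = x ∧ q = y) → ¬(p = y ∧ q = z) → ¬(p = x ∧ q = z) →
      a₃.1 p q = a.1 p q := by
    intro p q h1 h2 h3
    rw [ha₃, UTflip_ne _ h3, ha₂, UTflip_ne _ h2, ha₁, UTflip_ne _ h1]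
  refine ⟨a₃, ⟨x, y, z, hxy, hyz, Or.inr ⟨e1, e2, e3, exy, eyz, exz⟩, ?_⟩, e1, e2, e3, eoff⟩
  intro s t h
  exact (eoff s t (fun hc => h (Or.inl hc)) (fun hc => h (Or.inr (Or.inl hc)))
    (fun hc => h (Or.inr (Or.inr hc)))).symm

lemma reverse3_min (a : UT n) {x y z : Fin (n+1)} (hxy : Arc a x y) (hyz : Arc a y z)
    (hzx : Arc a z x) (h1 : x < y) (h2 : x < z) :
    ∃ a' : UT n, UTAdj a a' ∧
      (∀ p q : Fin (n+1), ((p,q) = sp x y ∨ (p,q) = sp y z ∨ (p,q) = sp z x) →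
        a'.1 p q = 1 - a.1 p q) ∧
      (∀ p q : Fin (n+1), (p,q) ≠ sp x y → (p,q) ≠ sp y z → (p,q) ≠ sp z x →
        a'.1 p q = a.1 p q) := by
  have hyz' : y ≠ z := arc_ne a hyz
  have exy : a.1 x y = 1 := by
    rcases hxy with ⟨-, e⟩ | ⟨hc, -⟩
    · exact e
    · exact absurd (h1.trans hc) (lt_irrefl _)
  have exz : a.1 x z = 0 := by
    rcases hzx with ⟨hc, -⟩ | ⟨-, e⟩
    · exact absurd (h2.trans hc) (lt_irrefl _)
    · exact e
  have spxy : sp x y = (x, y) := by rw [sp, if_pos h1]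
  have spzx : sp z x = (x, z) := by rw [sp, if_neg (asymm h2)]
  rcases lt_or_gt_of_ne hyz' with hlt | hlt
  · -- x < y < z
    have eyz : a.1 y z = 1 := by
      rcases hyz with ⟨-, e⟩ | ⟨hc, -⟩
      · exact e
      · exact absurd (hlt.trans hc) (lt_irrefl _)
    have spyz : sp y z = (y, z) := by rw [sp, if_pos hlt]
    obtain ⟨a', hadj, e1, e2, e3, eoff⟩ := reverse3_ordered a h1 hlt exy eyz exz
    refine ⟨a', hadj, ?_, ?_⟩
    · intro p q h
      rw [spxy, spyz, spzx] at h
      rcases h with h | h | h <;> rw [Prod.mk.injEq] at h <;> obtain ⟨rfl, rfl⟩ := h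
      · rw [e1, exy]; norm_num
      · rw [e2, eyz]; norm_num
      · rw [e3, exz]; norm_num
    · intro p q hh1 hh2 hh3
      rw [spxy] at hh1; rw [spyz] at hh2; rw [spzx] at hh3
      exact eoff p q (fun hc => hh1 (by rw [hc.1, hc.2])) (fun hc => hh2 (by rw [hc.1, hc.2]))
        (fun hc => hh3 (by rw [hc.1, hc.2]))
  · -- x < z < y
    have ezy : a.1 z y = 0 := by
      rcases hyz with ⟨hc, -⟩ | ⟨-, e⟩
      · exact absurd (hlt.trans hc) (lt_irrefl _)
      · exact e
    have spyz : sp y z = (z, y) := by rw [sp, if_neg (asymm hlt)]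
    obtain ⟨a', hadj, e1, e2, e3, eoff⟩ := reverse3_ordered' a h2 hlt exz ezy exy
    refine ⟨a', hadj, ?_, ?_⟩
    · intro p q h
      rw [spxy, spyz, spzx] at h
      rcases h with h | h | h <;> rw [Prod.mk.injEq] at h <;> obtain ⟨rfl, rfl⟩ := h
      · rw [e3, exy]; norm_num
      · rw [e2, ezy]; norm_num
      · rw [e1, exz]; norm_num
    · intro p q hh1 hh2 hh3
      rw [spxy] at hh1; rw [spyz] at hh2; rw [spzx] at hh3
      exact eoff p q (fun hc => hh3 (by rw [hc.1, hc.2])) (fun hc => hh2 (by rw [hc.1, hc.2]))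
        (fun hc => hh1 (by rw [hc.1, hc.2]))

lemma reverse3 (a : UT n) {x y z : Fin (n+1)} (hxy : Arc a x y) (hyz : Arc a y z)
    (hzx : Arc a z x) :
    ∃ a' : UT n, UTAdj a a' ∧
      (∀ p q : Fin (n+1), ((p,q) = sp x y ∨ (p,q) = sp y z ∨ (p,q) = sp z x) →
        a'.1 p q = 1 - a.1 p q) ∧
      (∀ p q : Fin (n+1), (p,q) ≠ sp x y → (p,q) ≠ sp y z → (p,q) ≠ sp z x →
        a'.1 p q = a.1 p q) := by
  have hxy' : x ≠ y := arc_ne a hxy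
  have hyz' : y ≠ z := arc_ne a hyz
  have hzx' : z ≠ x := arc_ne a hzx
  rcases lt_or_gt_of_ne hxy' with h1 | h1
  · rcases lt_or_gt_of_ne hzx'.symm with h2 | h2
    · exact reverse3_min a hxy hyz hzx h1 h2
    · -- z < x < y : z is min
      obtain ⟨a', hadj, t1, t2⟩ := reverse3_min a hzx hxy hyz h2 (h2.trans h1)
      exact ⟨a', hadj, fun p q h => t1 p q (by tauto), fun p q u1 u2 u3 => t2 p q u3 u1 u2⟩
  · rcases lt_or_gt_of_ne hyz' with h2 | h2
    · -- y < x, y < z : y is min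
      obtain ⟨a', hadj, t1, t2⟩ := reverse3_min a hyz hzx hxy h2 h1
      exact ⟨a', hadj, fun p q h => t1 p q (by tauto), fun p q u1 u2 u3 => t2 p q u2 u3 u1⟩
    · -- z < y < x : z is min
      obtain ⟨a', hadj, t1, t2⟩ := reverse3_min a hzx hxy hyz (h2.trans h1) h2
      exact ⟨a', hadj, fun p q h => t1 p q (by tauto), fun p q u1 u2 u3 => t2 p q u3 u1 u2⟩

lemma gauss (r : ℕ) : (∑ t ∈ Finset.range r, (t:ℤ)) * 2 = r * (r - 1) := by
  induction r with
  | zero => simp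
  | succ m ih =>
    rw [Finset.sum_range_succ]
    push_cast
    push_cast at ih
    linarith

lemma sum_weight_closed (b : UT n) (R : Finset (Fin (n+1)))
    (hR : ∀ v ∈ R, ∀ w, Arc b v w → w ∈ R) :
    ∑ v ∈ R, UTweight b v = ∑ t ∈ Finset.range R.card, (t:ℤ) := by
  classical
  have h1 : ∀ v ∈ R, UTweight b v = ∑ k ∈ R, (if Arc b v k then (1:ℤ) else 0) := by
    intro v hv
    rw [weight_eq_sum_arc]
    rw [← Finset.sum_subset (Finset.subset_univ R) (fun k _ hk => ?_)]
    split
    · next h => exact absurd (hR v hv k h) hk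
    · rfl
  have key : ∀ v ∈ R, ∀ k ∈ R, ((if Arc b v k then (1:ℤ) else 0) + (if Arc b k v then 1 else 0))
      = if v = k then 0 else 1 := by
    intro v _ k _
    by_cases h : v = k
    · subst h
      simp [arc_irrefl b v]
    · rw [if_neg h]
      rcases arc_total b h with ha | ha
      · rw [if_pos ha, if_neg (fun hc => arc_asymm b ha hc)]
        norm_num
      · rw [if_neg (fun hc => arc_asymm b hc ha), if_pos ha]
        norm_num
  have hdouble : (∑ v ∈ R, UTweight b v) * 2 = (R.card : ℤ) * (R.card - 1) := by
    have e1 : (∑ v ∈ R, UTweight b v) = ∑ v ∈ R, ∑ k ∈ R, (if Arc b v k then (1:ℤ) else 0) :=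
      Finset.sum_congr rfl h1
    have e2 : (∑ v ∈ R, ∑ k ∈ R, (if Arc b v k then (1:ℤ) else 0))
        = ∑ v ∈ R, ∑ k ∈ R, (if Arc b k v then (1:ℤ) else 0) := Finset.sum_comm
    calc (∑ v ∈ R, UTweight b v) * 2
        = (∑ v ∈ R, ∑ k ∈ R, (if Arc b v k then (1:ℤ) else 0))
          + (∑ v ∈ R, ∑ k ∈ R, (if Arc b k v then (1:ℤ) else 0)) := by
          rw [e1, mul_two]
          nth_rewrite 2 [e2]
          rfl
      _ = ∑ v ∈ R, ((∑ k ∈ R, (if Arc b v k then (1:ℤ) else 0))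
          + (∑ k ∈ R, (if Arc b k v then (1:ℤ) else 0))) := Finset.sum_add_distrib.symm
      _ = ∑ v ∈ R, ∑ k ∈ R, ((if Arc b v k then (1:ℤ) else 0) + (if Arc b k v then 1 else 0)) :=
          Finset.sum_congr rfl (fun v _ => Finset.sum_add_distrib.symm)
      _ = ∑ v ∈ R, ∑ k ∈ R, (if v = k then (0:ℤ) else 1) :=
          Finset.sum_congr rfl (fun v hv => Finset.sum_congr rfl (fun k hk => key v hv k hk))
      _ = ∑ _v ∈ R, ((R.card : ℤ) - 1) := by
          refine Finset.sum_congr rfl (fun v hv => ?_)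
          have : ∀ k ∈ R, (if v = k then (0:ℤ) else 1) = 1 - (if v = k then 1 else 0) := by
            intro k _
            split <;> norm_num
          rw [Finset.sum_congr rfl this, Finset.sum_sub_distrib, Finset.sum_const,
            Finset.sum_ite_eq R v (fun _ => (1:ℤ)), if_pos hv, nsmul_eq_mul, mul_one]
      _ = (R.card : ℤ) * (R.card - 1) := by
          rw [Finset.sum_const, nsmul_eq_mul]
  have g := gauss R.card
  linarith

section chains

variable {α : Type*} {R S : α → α → Prop}

lemma chain_congr_of_mem : ∀ (l : List α) (x : α), List.Chain R x l →
    (∀ p q, p ∈ x :: l → q ∈ x :: l → R p q → S p q) → List.Chain S x l := by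
  intro l
  induction l with
  | nil => intro x _ _; exact List.Chain.nil
  | cons v l' ih =>
    intro x hc hmem
    simp only [List.Chain, List.chain_cons] at hc ⊢
    refine ⟨hmem x v (by simp) (by simp) hc.1, ih v hc.2 (fun p q hp hq hr => ?_)⟩
    exact hmem p q (by simp at hp ⊢; tauto) (by simp at hq ⊢; tauto) hr

lemma chain_dedup : ∀ (N : ℕ) (l : List α) (x : α), l.length ≤ N → List.Chain R x l →
    ∃ l', List.Chain R x l' ∧ (x :: l').Nodup ∧
      (x :: l').getLast (List.cons_ne_nil _ _) = (x :: l).getLast (List.cons_ne_nil _ _) ∧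
      l' ⊆ l := by
  intro N
  induction N with
  | zero =>
    intro l x hl _
    rw [Nat.le_zero, List.length_eq_zero_iff] at hl
    subst hl
    exact ⟨[], List.Chain.nil, by simp, rfl, by simp⟩
  | succ m ih =>
    intro l x hl hc
    by_cases hx : x ∈ l
    · obtain ⟨l1, l2, rfl⟩ := List.append_of_mem hx
      have hc2 : List.Chain R x l2 := (List.isChain_cons_split.mp hc).2
      have hlen : l2.length ≤ m := by
        rw [List.length_append, List.length_cons] at hl
        omega
      obtain ⟨l', h1, h2, h3, h4⟩ := ih l2 x hlen hc2
      refine ⟨l', h1, h2, ?_, fun a ha => by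
        rw [List.mem_append, List.mem_cons]; exact Or.inr (Or.inr (h4 ha))⟩
      rw [h3]
      have : x :: (l1 ++ x :: l2) = (x :: l1) ++ (x :: l2) := by simp
      rw [List.getLast_congr _ (by simp) this, List.getLast_append_of_ne_nil (l := x :: l1) (by simp) (List.cons_ne_nil _ _)]
    · cases l with
      | nil => exact ⟨[], List.Chain.nil, by simp, rfl, by simp⟩
      | cons c l2 =>
        simp only [List.Chain, List.chain_cons] at hc
        have hlen : l2.length ≤ m := by
          rw [List.length_cons] at hl
          omega
        obtain ⟨l', h1, h2, h3, h4⟩ := ih l2 c hlen hc.2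
        refine ⟨c :: l', List.chain_cons.mpr ⟨hc.1, h1⟩, ?_, ?_, ?_⟩
        · refine List.nodup_cons.mpr ⟨?_, h2⟩
          intro hmem
          rcases List.mem_cons.mp hmem with h | h
          · exact hx (h ▸ List.mem_cons_self (a := c) (l := l2))
          · exact hx (List.mem_cons.mpr (Or.inr (h4 h)))
        · rw [List.getLast_cons (List.cons_ne_nil _ _), h3,
            ← List.getLast_cons (l := c :: l2) (List.cons_ne_nil _ _)]
        · intro a ha
          rcases List.mem_cons.mp ha with h | h
          · exact h ▸ List.mem_cons_self (a := c) (l := l2)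
          · exact List.mem_cons.mpr (Or.inr (h4 h))

end chains

lemma flip_arc (b : UT n) {u v : Fin (n+1)} (h : Arc b u v) :
    ∃ b₁ : UT n,
      (∀ w, UTweight b₁ w = UTweight b w - (if w = u then 1 else 0) + (if w = v then 1 else 0)) ∧
      (∀ p q : Fin (n+1), ¬(p = u ∧ q = v) → ¬(p = v ∧ q = u) → b₁.1 p q = b.1 p q) := by
  rcases h with ⟨hlt, he⟩ | ⟨hlt, he⟩
  · refine ⟨UTflip b u v, fun w => ?_, fun p q h1 _ => UTflip_ne b h1⟩
    rw [UTflip_weight b hlt w, he, wdelta]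
    ring
  · refine ⟨UTflip b v u, fun w => ?_, fun p q _ h2 => UTflip_ne b h2⟩
    rw [UTflip_weight b hlt w, he, wdelta]
    ring

lemma flipChain : ∀ (l : List (Fin (n+1))) (b : UT n) (u t : Fin (n+1)), l ≠ [] →
    List.Chain (Arc b) u l → (u :: l).Nodup →
    (u :: l).getLast (List.cons_ne_nil _ _) = t →
    ∃ a : UT n,
      (∀ v, UTweight a v = UTweight b v - (if v = u then 1 else 0) + (if v = t then 1 else 0)) ∧
      (∀ p q : Fin (n+1), a.1 p q ≠ b.1 p q → (p, q) ∈ (u :: l).zip l ∨ (q, p) ∈ (u :: l).zip l) := by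
  intro l
  induction l with
  | nil => intro b u t hne; exact absurd rfl hne
  | cons v rest ih =>
    intro b u t _ hc hnd hlast
    simp only [List.Chain, List.chain_cons] at hc
    obtain ⟨b₁, hw₁, he₁⟩ := flip_arc b hc.1
    have huv : u ≠ v := arc_ne b hc.1
    have hu_notmem : u ∉ v :: rest := (List.nodup_cons.mp hnd).1
    cases rest with
    | nil =>
      have hvt : v = t := by simpa using hlast
      subst hvt
      refine ⟨b₁, hw₁, fun p q hne => ?_⟩
      by_cases h1 : p = u ∧ q = v
      · rw [List.zip_cons_cons]
        exact Or.inl (by rw [h1.1, h1.2]; simp)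
      · by_cases h2 : p = v ∧ q = u
        · rw [List.zip_cons_cons]
          exact Or.inr (by rw [h2.1, h2.2]; simp)
        · exact absurd (he₁ p q h1 h2) hne
    | cons w rest' =>
      have hchain₁ : List.Chain (Arc b₁) v (w :: rest') := by
        refine chain_congr_of_mem (w :: rest') v hc.2 (fun p q hp hq hr => ?_)
        have hpu : p ≠ u := fun hh => hu_notmem (hh ▸ hp)
        have hqu : q ≠ u := fun hh => hu_notmem (hh ▸ hq)
        refine (arc_congr (fun _ => ?_) (fun _ => ?_)).mpr hr
        · exact he₁ p q (fun hh => hpu hh.1) (fun hh => hqu hh.2)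
        · exact he₁ q p (fun hh => hqu hh.1) (fun hh => hpu hh.2)
      have hlast' : (v :: w :: rest').getLast (List.cons_ne_nil _ _) = t := by
        rw [← hlast]
        exact (List.getLast_cons (List.cons_ne_nil _ _)).symm
      obtain ⟨a, hwa, hea⟩ := ih b₁ v t (List.cons_ne_nil _ _) hchain₁
        (List.nodup_cons.mp hnd).2 hlast'
      refine ⟨a, fun x => ?_, fun p q hne => ?_⟩
      · rw [hwa x, hw₁ x]
        have hut : u ≠ t := by
          intro hh
          apply hu_notmem
          rw [hh, ← hlast']
          exact List.getLast_mem _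
        by_cases h1 : x = u <;> by_cases h2 : x = v <;> by_cases h3 : x = t <;>
          simp [h1, h2, h3] <;> first
            | ring
            | (exfalso; first
                | exact huv (h1 ▸ h2 ▸ rfl)
                | exact hut (h1 ▸ h3 ▸ rfl)
                | skip)
      · by_cases hab : a.1 p q = b₁.1 p q
        · have hne₁ : b₁.1 p q ≠ b.1 p q := fun hh => hne (hab.trans hh)
          by_cases h1 : p = u ∧ q = v
          · rw [List.zip_cons_cons]
            exact Or.inl (by rw [h1.1, h1.2]; simp)
          · by_cases h2 : p = v ∧ q = u
            · rw [List.zip_cons_cons]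
              exact Or.inr (by rw [h2.1, h2.2]; simp)
            · exact absurd (he₁ p q h1 h2) hne₁
        · rcases hea p q hab with hm | hm
          · rw [List.zip_cons_cons]
            exact Or.inl (List.mem_cons.mpr (Or.inr hm))
          · rw [List.zip_cons_cons]
            exact Or.inr (List.mem_cons.mpr (Or.inr hm))

lemma sum_weight (b : UT n) : ∑ v : Fin (n+1), UTweight b v = ∑ k : Fin (n+1), (k:ℤ) := by
  have h := sum_weight_closed b Finset.univ (fun v _ w _ => Finset.mem_univ w)
  rw [h, Finset.card_univ, Fintype.card_fin]
  rw [Fin.sum_univ_eq_sum_range (fun k => (k:ℤ)) (n+1)]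

def UTtriv (n : ℕ) : UT n :=
  ⟨fun i j => if i < j then 1 else 0, by
    intro i j
    constructor
    · intro hij; right; simp [hij]
    · intro hij; simp [hij]⟩


lemma exists_reach_lt (b : UT n) (s : Fin (n+1)) (α : Fin (n+1) → ℤ) (hα : InOmega α)
    (hs : α s < UTweight b s) :
    ∃ t, Relation.ReflTransGen (Arc b) s t ∧ UTweight b t < α t := by
  classical
  by_contra hno
  push_neg at hno
  set R : Finset (Fin (n+1)) := Finset.univ.filter (fun v => Relation.ReflTransGen (Arc b) s v)
    with hR
  have hclosed : ∀ v ∈ R, ∀ w, Arc b v w → w ∈ R := by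
    intro v hv w hw
    rw [hR, Finset.mem_filter] at hv ⊢
    exact ⟨Finset.mem_univ w, hv.2.tail hw⟩
  have hsR : s ∈ R := by
    rw [hR, Finset.mem_filter]
    exact ⟨Finset.mem_univ s, Relation.ReflTransGen.refl⟩
  have hsum := sum_weight_closed b R hclosed
  have hlt : ∑ v ∈ R, α v < ∑ v ∈ R, UTweight b v := by
    refine Finset.sum_lt_sum (fun v hv => ?_) ⟨s, hsR, hs⟩
    rw [hR, Finset.mem_filter] at hv
    exact hno v hv.2
  have := hα.2 R
  omega

lemma measure_zero {α : Fin (n+1) → ℤ} {b : UT n}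
    (h : (∑ v : Fin (n+1), (UTweight b v - α v).natAbs) = 0) : UTweight b = α := by
  funext v
  have := (Finset.sum_eq_zero_iff.mp h) v (Finset.mem_univ v)
  omega

lemma realize (α : Fin (n+1) → ℤ) (hα : InOmega α) : ∃ b : UT n, UTweight b = α := by
  classical
  suffices key : ∀ N : ℕ, ∀ b : UT n, (∑ v : Fin (n+1), (UTweight b v - α v).natAbs) = N →
      ∃ a : UT n, UTweight a = α by
    exact key _ (UTtriv n) rfl
  intro N
  induction N using Nat.strong_induction_on with
  | _ N ih =>
    intro b hb
    by_cases hzero : (∑ v : Fin (n+1), (UTweight b v - α v).natAbs) = 0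
    · exact ⟨b, measure_zero hzero⟩
    · -- find s with α s < weight s
      have hex : ∃ s, α s < UTweight b s := by
        by_contra hno
        push_neg at hno
        have htot : ∑ v : Fin (n+1), (α v - UTweight b v) = 0 := by
          rw [Finset.sum_sub_distrib, hα.1, sum_weight b]
          ring
        have hall : ∀ v ∈ Finset.univ, (α v - UTweight b v) = 0 := by
          refine (Finset.sum_eq_zero_iff_of_nonneg (fun v _ => ?_)).mp htot
          have := hno v
          omega
        apply hzero
        refine Finset.sum_eq_zero (fun v _ => ?_)
        have := hall v (Finset.mem_univ v)
        omega
      obtain ⟨s, hs⟩ := hex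
      obtain ⟨t, hreach, ht⟩ := exists_reach_lt b s α hα hs
      have hst : s ≠ t := by
        intro hh
        rw [hh] at hs
        omega
      obtain ⟨l, hchain, hlast⟩ := List.exists_isChain_cons_of_relationReflTransGen hreach
      obtain ⟨l', hchain', hnd', hlast', -⟩ := chain_dedup l.length l s le_rfl hchain
      rw [hlast] at hlast'
      have hlne : l' ≠ [] := by
        intro hh
        subst hh
        simp at hlast'
        exact hst hlast'
      obtain ⟨a, hwa, -⟩ := flipChain l' b s t hlne hchain' hnd' hlast'
      have hbound : ∀ v : Fin (n+1), (UTweight a v - α v).natAbs ≤ (UTweight b v - α v).natAbs := by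
        intro v
        rw [hwa v]
        by_cases h1 : v = s
        · subst h1
          rw [if_pos rfl, if_neg hst]
          omega
        · by_cases h2 : v = t
          · subst h2
            rw [if_neg h1, if_pos rfl]
            omega
          · rw [if_neg h1, if_neg h2]
            omega
      have hstrict : (UTweight a s - α s).natAbs < (UTweight b s - α s).natAbs := by
        rw [hwa s, if_pos rfl, if_neg hst]
        omega
      have hlt : (∑ v : Fin (n+1), (UTweight a v - α v).natAbs) < N := by
        rw [← hb]
        exact Finset.sum_lt_sum (fun v _ => hbound v) ⟨s, Finset.mem_univ s, hstrict⟩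
      exact ih _ hlt a rfl


lemma UTset_same (a : UT n) {s t : Fin (n+1)} (h : s < t) : (UTset a s t).1 s t = 1 := by
  show (if _ then _ else _) = _
  rw [if_pos ⟨rfl, rfl, h⟩]

lemma UTset_ne (a : UT n) {s t i j : Fin (n+1)} (h : ¬(i = s ∧ j = t)) :
    (UTset a s t).1 i j = a.1 i j := by
  show (if _ then _ else _) = _
  rw [if_neg (fun hc : i = s ∧ j = t ∧ s < t => h ⟨hc.1, hc.2.1⟩)]

lemma UTset_weight (a : UT n) {s t : Fin (n+1)} (h : s < t) (h0 : a.1 s t = 0)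
    (v : Fin (n+1)) : UTweight (UTset a s t) v = UTweight a v + wdelta v s t := by
  have := weight_congr_single a (UTset a s t) h (fun i j hij => UTset_ne a hij) v
  rw [this, UTset_same a h, h0]
  ring

lemma zip_head_case {α : Type*} {u : α} {l : List α} {p q : α} (h : (p, q) ∈ (u :: l).zip l) :
    (p = u ∧ l.head? = some q) ∨ (p, q) ∈ l.zip l.tail := by
  cases l with
  | nil => simp at h
  | cons c l' =>
    rw [List.zip_cons_cons] at h
    rcases List.mem_cons.mp h with h | h
    · rw [Prod.mk.injEq] at h
      exact Or.inl ⟨h.1, by rw [h.2]; rfl⟩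
    · exact Or.inr h

lemma head_last_nodup {α : Type*} {l : List α} {x : α} (hne : l ≠ []) (hnd : l.Nodup)
    (hh : l.head? = some x) (hl : l.getLast hne = x) : l = [x] := by
  cases l with
  | nil => exact absurd rfl hne
  | cons c l2 =>
    have hcx : c = x := by simpa using hh
    subst hcx
    cases l2 with
    | nil => rfl
    | cons d l3 =>
      exfalso
      have : (c :: d :: l3).getLast (List.cons_ne_nil _ _) = (d :: l3).getLast (List.cons_ne_nil _ _) :=
        List.getLast_cons (List.cons_ne_nil _ _)
      rw [this] at hl
      have : c ∈ d :: l3 := hl ▸ List.getLast_mem _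
      exact (List.nodup_cons.mp hnd).1 this

lemma part2 (α : Fin (n+1) → ℤ) (hα : InOmega α) (s t : Fin (n+1)) (hst : s < t)
    (hα' : InOmega (Function.update (Function.update α s (α s + 1)) t (α t - 1))) :
    ∃ a : UT n, UTweight a = α ∧ a.1 s t = 0 ∧
      UTweight (UTset a s t) = Function.update (Function.update α s (α s + 1)) t (α t - 1) := by
  classical
  set α' := Function.update (Function.update α s (α s + 1)) t (α t - 1) with hα'def
  have hst' : s ≠ t := ne_of_lt hst
  have hA's : α' s = α s + 1 := by
    rw [hα'def, Function.update_of_ne hst', Function.update_self]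
  have hA't : α' t = α t - 1 := by
    rw [hα'def, Function.update_self]
  have hA' : ∀ v, v ≠ s → v ≠ t → α' v = α v := by
    intro v h1 h2
    rw [hα'def, Function.update_of_ne h2, Function.update_of_ne h1]
  obtain ⟨b, hb⟩ := realize α' hα'
  have hbv : ∀ v, UTweight b v = α' v := fun v => congrFun hb v
  -- key: from an array of weight α' with entry (s,t) = 0, build the final answer
  have final : ∀ a : UT n, (∀ v, UTweight a v = α v) → a.1 s t = 0 →
      UTweight a = α ∧ a.1 s t = 0 ∧ UTweight (UTset a s t) = α' := by
    intro a hwa h0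
    refine ⟨funext hwa, h0, funext (fun v => ?_)⟩
    rw [UTset_weight a hst h0 v, hwa v, wdelta]
    by_cases h1 : v = s
    · subst h1
      rw [if_pos rfl, if_neg hst', hA's]
      ring
    · by_cases h2 : v = t
      · subst h2
        rw [if_neg h1, if_pos rfl, hA't]
        ring
      · rw [if_neg h1, if_neg h2, hA' v h1 h2]
        ring
  rcases entry01 b s t with e0 | e1
  · -- b already has entry 0 : flip a path from s to t
    have harc_ts : Arc b t s := Or.inr ⟨hst, e0⟩
    have hreach : Relation.ReflTransGen (Arc b) s t := by
      by_contra hno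
      set R : Finset (Fin (n+1)) := Finset.univ.filter (fun v => Relation.ReflTransGen (Arc b) s v)
        with hR
      have hclosed : ∀ v ∈ R, ∀ w, Arc b v w → w ∈ R := by
        intro v hv w hw
        rw [hR, Finset.mem_filter] at hv ⊢
        exact ⟨Finset.mem_univ w, hv.2.tail hw⟩
      have hsR : s ∈ R := by
        rw [hR, Finset.mem_filter]
        exact ⟨Finset.mem_univ s, Relation.ReflTransGen.refl⟩
      have htR : t ∉ R := by
        rw [hR, Finset.mem_filter]
        exact fun hc => hno hc.2
      have hsum := sum_weight_closed b R hclosed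
      have hA : ∑ v ∈ R, α v = (∑ v ∈ R, α' v) - 1 := by
        have : ∀ v ∈ R, α v = α' v - (if v = s then 1 else 0) := by
          intro v hv
          by_cases h1 : v = s
          · subst h1
            rw [if_pos rfl, hA's]
            ring
          · have h2 : v ≠ t := fun hh => htR (hh ▸ hv)
            rw [if_neg h1, hA' v h1 h2]
            ring
        rw [Finset.sum_congr rfl this, Finset.sum_sub_distrib,
          Finset.sum_ite_eq' R s (fun _ => (1:ℤ)), if_pos hsR]
      have hwR : ∑ v ∈ R, UTweight b v = ∑ v ∈ R, α' v :=
        Finset.sum_congr rfl (fun v _ => hbv v)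
      have := hα.2 R
      omega
    obtain ⟨l, hchain, hlast⟩ := List.exists_isChain_cons_of_relationReflTransGen hreach
    obtain ⟨l', hchain', hnd', hlast', -⟩ := chain_dedup l.length l s le_rfl hchain
    rw [hlast] at hlast'
    have hlne : l' ≠ [] := by
      intro hh
      subst hh
      simp at hlast'
      exact hst' hlast'
    obtain ⟨a, hwa, hdiff⟩ := flipChain l' b s t hlne hchain' hnd' hlast'
    have hsl : s ∉ l' := (List.nodup_cons.mp hnd').1
    have h0 : a.1 s t = b.1 s t := by
      by_contra hne
      rcases hdiff s t hne with hm | hm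
      · rcases zip_head_case hm with ⟨-, hhead⟩ | hm'
        · -- l' starts with t, and ends with t, nodup ⇒ l' = [t]
          have hgl : l'.getLast hlne = t := by
            have := List.getLast_cons (a := s) hlne
            rw [hlast'] at this
            exact this.symm
          have : l' = [t] := head_last_nodup hlne (List.nodup_cons.mp hnd').2 hhead hgl
          subst this
          simp only [List.Chain, List.chain_cons] at hchain'
          exact arc_asymm b hchain'.1 harc_ts
        · exact hsl (List.of_mem_zip hm').1
      · exact hsl (List.of_mem_zip hm).2
    have hwa' : ∀ v, UTweight a v = α v := by
      intro v
      rw [hwa v, hbv v]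
      by_cases h1 : v = s
      · subst h1
        rw [if_pos rfl, if_neg hst', hA's]
        ring
      · by_cases h2 : v = t
        · subst h2
          rw [if_neg h1, if_pos rfl, hA't]
          ring
        · rw [if_neg h1, if_neg h2, hA' v h1 h2]
          ring
    exact ⟨a, final a hwa' (h0.trans e0)⟩
  · -- entry is 1 : flip it
    set a := UTflip b s t with ha
    have h0 : a.1 s t = 0 := by
      rw [ha, UTflip_same b hst, e1]
      norm_num
    have hwa' : ∀ v, UTweight a v = α v := by
      intro v
      rw [ha, UTflip_weight b hst v, e1, hbv v, wdelta]
      by_cases h1 : v = s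
      · subst h1
        rw [if_pos rfl, if_neg hst', hA's]
        ring
      · by_cases h2 : v = t
        · subst h2
          rw [if_neg h1, if_pos rfl, hA't]
          ring
        · rw [if_neg h1, if_neg h2, hA' v h1 h2]
          ring
    exact ⟨a, final a hwa' h0⟩

def Drel (a b : UT n) (x y : Fin (n+1)) : Prop := Arc a x y ∧ Arc b y x

instance (a b : UT n) (x y : Fin (n+1)) : Decidable (Drel a b x y) := by
  unfold Drel; infer_instance

lemma D_out_eq_in (a b : UT n) (hw : UTweight a = UTweight b) (v : Fin (n+1)) :
    ∑ k : Fin (n+1), (if Drel a b v k then (1:ℤ) else 0)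
      = ∑ k : Fin (n+1), (if Drel a b k v then 1 else 0) := by
  have e1 : ∀ k : Fin (n+1), (if Arc a v k then (1:ℤ) else 0)
      = (if Arc a v k ∧ Arc b v k then (1:ℤ) else 0) + (if Drel a b v k then 1 else 0) := by
    intro k
    by_cases hvk : v = k
    · subst hvk
      rw [if_neg (arc_irrefl a v), if_neg (fun h : _ ∧ _ => arc_irrefl a v h.1),
        if_neg (fun h : Drel a b v v => arc_irrefl a v h.1)]
      norm_num
    · by_cases ha : Arc a v k
      · rw [if_pos ha]
        rcases arc_total b hvk with hb | hb
        · rw [if_pos ⟨ha, hb⟩, if_neg (fun h : Drel a b v k => arc_asymm b hb h.2)]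
          norm_num
        · rw [if_neg (fun h : _ ∧ _ => arc_asymm b h.2 hb), if_pos ⟨ha, hb⟩]
          norm_num
      · rw [if_neg ha, if_neg (fun h : _ ∧ _ => ha h.1), if_neg (fun h : Drel a b v k => ha h.1)]
        norm_num
  have e2 : ∀ k : Fin (n+1), (if Arc b v k then (1:ℤ) else 0)
      = (if Arc a v k ∧ Arc b v k then (1:ℤ) else 0) + (if Drel a b k v then 1 else 0) := by
    intro k
    by_cases hvk : v = k
    · subst hvk
      rw [if_neg (arc_irrefl b v), if_neg (fun h : _ ∧ _ => arc_irrefl b v h.2),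
        if_neg (fun h : Drel a b v v => arc_irrefl a v h.1)]
      norm_num
    · by_cases hb : Arc b v k
      · rw [if_pos hb]
        rcases arc_total a hvk with ha | ha
        · rw [if_pos ⟨ha, hb⟩, if_neg (fun h : Drel a b k v => arc_asymm a ha h.1)]
          norm_num
        · rw [if_neg (fun h : _ ∧ _ => arc_asymm a h.1 ha), if_pos ⟨ha, hb⟩]
          norm_num
      · rw [if_neg hb, if_neg (fun h : _ ∧ _ => hb h.2),
          if_neg (fun h : Drel a b k v => hb h.2)]
        norm_num
  have hsum : UTweight a v = UTweight b v := congrFun hw v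
  rw [weight_eq_sum_arc a v, weight_eq_sum_arc b v, Finset.sum_congr rfl (fun k _ => e1 k),
    Finset.sum_congr rfl (fun k _ => e2 k), Finset.sum_add_distrib, Finset.sum_add_distrib] at hsum
  omega

lemma D_succ_exists (a b : UT n) (hw : UTweight a = UTweight b) {u v : Fin (n+1)}
    (h : Drel a b u v) : ∃ w, Drel a b v w := by
  by_contra hno
  push_neg at hno
  have h0 : ∑ k : Fin (n+1), (if Drel a b v k then (1:ℤ) else 0) = 0 :=
    Finset.sum_eq_zero (fun k _ => if_neg (hno k))
  have h1 : (1:ℤ) ≤ ∑ k : Fin (n+1), (if Drel a b k v then 1 else 0) := by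
    have h2 := Finset.single_le_sum (f := fun k : Fin (n+1) => if Drel a b k v then (1:ℤ) else 0)
      (fun k _ => by positivity) (Finset.mem_univ u)
    refine le_trans ?_ h2
    simp [h]
  rw [D_out_eq_in a b hw v] at h0
  omega

lemma exists_D_cycle (a b : UT n) (hw : UTweight a = UTweight b) (hne : a.1 ≠ b.1) :
    ∃ (m : ℕ) (c : ℕ → Fin (n+1)), 3 ≤ m ∧
      (∀ p, p < m → ∀ q, q < m → c p = c q → p = q) ∧
      (∀ k, k < m → Drel a b (c k) (c ((k+1) % m))) := by
  classical
  -- find an initial D-pair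
  have hpair : ∃ x y, Drel a b x y := by
    have : ∃ p q, a.1 p q ≠ b.1 p q := by
      by_contra hno
      push_neg at hno
      exact hne (funext (fun p => funext (fun q => hno p q)))
    obtain ⟨p, q, hpq⟩ := this
    have hlt : p < q := by
      by_contra hc
      rw [(a.2 p q).2 hc, (b.2 p q).2 hc] at hpq
      exact hpq rfl
    rcases entry01 a p q with ha | ha <;> rcases entry01 b p q with hb | hb
    · exact absurd (ha.trans hb.symm) hpq
    · exact ⟨q, p, Or.inr ⟨hlt, ha⟩, Or.inl ⟨hlt, hb⟩⟩
    · exact ⟨p, q, Or.inl ⟨hlt, ha⟩, Or.inr ⟨hlt, hb⟩⟩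
    · exact absurd (ha.trans hb.symm) hpq
  obtain ⟨x0, y0, hD0⟩ := hpair
  set g : Fin (n+1) → Fin (n+1) :=
    fun v => if h : ∃ w, Drel a b v w then h.choose else v with hg
  have gstep : ∀ v : Fin (n+1), (∃ w, Drel a b v w) → Drel a b v (g v) := by
    intro v h
    rw [hg]
    dsimp only
    rw [dif_pos h]
    exact h.choose_spec
  have hiter : ∀ k : ℕ, Drel a b (g^[k] x0) (g^[k+1] x0) := by
    intro k
    induction k with
    | zero =>
      rw [Function.iterate_zero_apply, Function.iterate_one]
      exact gstep x0 ⟨y0, hD0⟩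
    | succ j ihj =>
      rw [Function.iterate_succ_apply' g (j+1) x0]
      exact gstep _ (D_succ_exists a b hw ihj)
  -- a collision exists
  have hP : ∃ j, ∃ i, i < j ∧ g^[j] x0 = g^[i] x0 := by
    have hcard : Fintype.card (Fin (n+1)) < Fintype.card (Fin (n+2)) := by
      simp [Fintype.card_fin]
    obtain ⟨i, j, hij, heq⟩ := Fintype.exists_ne_map_eq_of_card_lt
      (fun k : Fin (n+2) => g^[(k:ℕ)] x0) hcard
    rcases lt_trichotomy (i:ℕ) (j:ℕ) with h | h | h
    · exact ⟨j, i, h, heq.symm⟩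
    · exact absurd (Fin.ext h) hij
    · exact ⟨i, j, h, heq⟩
  have hfind : ∃ j, (∃ i, i < j ∧ g^[j] x0 = g^[i] x0) ∧
      ∀ j', j' < j → ¬ ∃ i, i < j' ∧ g^[j'] x0 = g^[i] x0 :=
    ⟨Nat.find hP, Nat.find_spec hP, fun j' hj' => Nat.find_min hP hj'⟩
  obtain ⟨j1, ⟨i1, hi1, heq1⟩, hmin0⟩ := hfind
  have hmin : ∀ j' i', i' < j' → j' < j1 → g^[j'] x0 ≠ g^[i'] x0 :=
    fun j' i' h1 h2 hc => hmin0 j' h2 ⟨i', h1, hc⟩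
  have hinj : ∀ p, p < j1 - i1 → ∀ q, q < j1 - i1 →
      g^[i1 + p] x0 = g^[i1 + q] x0 → p = q := by
    intro p hp q hq hpq
    by_contra hne'
    rcases Nat.lt_or_ge p q with h | h
    · exact hmin (i1 + q) (i1 + p) (by omega) (by omega) hpq.symm
    · exact hmin (i1 + p) (i1 + q) (by omega) (by omega) hpq
  have hcyc : ∀ k, k < j1 - i1 →
      Drel a b (g^[i1 + k] x0) (g^[i1 + ((k+1) % (j1 - i1))] x0) := by
    intro k hk
    by_cases hlast : k + 1 = j1 - i1
    · have e2 : i1 + (k+1) % (j1 - i1) = i1 := by rw [hlast, Nat.mod_self]; omega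
      have e3 : j1 = (i1 + k) + 1 := by omega
      rw [e2, ← heq1, e3]
      exact hiter (i1 + k)
    · have hklt : k + 1 < j1 - i1 := by omega
      have e2 : i1 + (k+1) % (j1 - i1) = (i1 + k) + 1 := by
        rw [Nat.mod_eq_of_lt hklt]
        omega
      rw [e2]
      exact hiter (i1 + k)
  have h3 : 3 ≤ j1 - i1 := by
    by_contra hlt3
    rcases (by omega : j1 - i1 = 1 ∨ j1 - i1 = 2) with h | h
    · have hD01 := hcyc 0 (by omega)
      have e1 : i1 + (0+1) % (j1 - i1) = i1 + 0 := by rw [h]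
      rw [e1] at hD01
      exact arc_irrefl a _ hD01.1
    · have hD01 := hcyc 0 (by omega)
      have e1 : i1 + (0+1) % (j1 - i1) = i1 + 1 := by rw [h]
      rw [e1] at hD01
      have hD10 := hcyc 1 (by omega)
      have e2 : i1 + (1+1) % (j1 - i1) = i1 + 0 := by rw [h]
      rw [e2] at hD10
      have e3 : i1 + 0 = i1 := rfl
      have e4 : i1 + 1 = i1 + 0 + 1 := rfl
      exact arc_asymm a (e4 ▸ hD01.1) (e4 ▸ hD10.1)
  exact ⟨j1 - i1, fun k => g^[i1 + k] x0, h3, hinj, hcyc⟩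

def Phi (a b : UT n) : ℕ :=
  ∑ P : Fin (n+1) × Fin (n+1), (a.1 P.1 P.2 - b.1 P.1 P.2).natAbs

lemma Phi_zero {a b : UT n} (h : Phi a b = 0) : a = b := by
  apply Subtype.ext
  funext p q
  have := (Finset.sum_eq_zero_iff.mp h) (p, q) (Finset.mem_univ _)
  simp only [Int.natAbs_eq_zero, sub_eq_zero] at this
  exact this

lemma sum_lt_three {γ : Type*} [Fintype γ] [DecidableEq γ] (f f' : γ → ℕ) (P₁ P₂ P₃ : γ)
    (h12 : P₁ ≠ P₂) (h13 : P₁ ≠ P₃) (h23 : P₂ ≠ P₃)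
    (hoff : ∀ p, p ≠ P₁ → p ≠ P₂ → p ≠ P₃ → f' p = f p)
    (h1 : f' P₁ = 0) (h1' : 1 ≤ f P₁) (h2 : f' P₂ = 0) (h2' : 1 ≤ f P₂) (h3 : f' P₃ ≤ 1) :
    ∑ p, f' p < ∑ p, f p := by
  classical
  set S : Finset γ := {P₁, P₂, P₃} with hS
  have hsub : S ⊆ Finset.univ := Finset.subset_univ S
  have hsplit : ∀ g : γ → ℕ, (∑ p ∈ Finset.univ \ S, g p) + (∑ p ∈ S, g p) = ∑ p, g p :=
    fun g => Finset.sum_sdiff hsub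
  have hoffS : ∀ p ∈ Finset.univ \ S, f' p = f p := by
    intro p hp
    rw [Finset.mem_sdiff, hS] at hp
    have := hp.2
    simp only [Finset.mem_insert, Finset.mem_singleton] at this
    push_neg at this
    exact hoff p this.1 this.2.1 this.2.2
  have hSsum : ∀ g : γ → ℕ, ∑ p ∈ S, g p = g P₁ + g P₂ + g P₃ := by
    intro g
    rw [hS, Finset.sum_insert (by simp [h12, h13]), Finset.sum_insert (by simp [h23]),
      Finset.sum_singleton]
    ring
  have e5 : (∑ p ∈ Finset.univ \ S, f' p) = ∑ p ∈ Finset.univ \ S, f p :=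
    Finset.sum_congr rfl hoffS
  calc ∑ p, f' p = (∑ p ∈ Finset.univ \ S, f' p) + (∑ p ∈ S, f' p) := (hsplit f').symm
    _ = (∑ p ∈ Finset.univ \ S, f p) + (∑ p ∈ S, f' p) := by rw [e5]
    _ ≤ (∑ p ∈ Finset.univ \ S, f p) + 1 := by
        have : (∑ p ∈ S, f' p) ≤ 1 := by
          rw [hSsum f', h1, h2]
          omega
        omega
    _ < (∑ p ∈ Finset.univ \ S, f p) + (∑ p ∈ S, f p) := by
        have : 2 ≤ (∑ p ∈ S, f p) := by
          rw [hSsum f]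
          omega
        omega
    _ = ∑ p, f p := hsplit f

lemma phi_entry_le (a b : UT n) (p q : Fin (n+1)) : (a.1 p q - b.1 p q).natAbs ≤ 1 := by
  rcases entry01 a p q with h | h <;> rcases entry01 b p q with h' | h' <;> omega

lemma D_sp {a b : UT n} {x y : Fin (n+1)} (h : Drel a b x y) :
    b.1 (sp x y).1 (sp x y).2 = 1 - a.1 (sp x y).1 (sp x y).2 := by
  obtain ⟨ha, hb⟩ := h
  have hne : x ≠ y := arc_ne a ha
  rcases lt_or_gt_of_ne hne with hl | hl
  · rw [sp, if_pos hl]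
    have e1 : a.1 x y = 1 := by
      rcases ha with ⟨-, e⟩ | ⟨hc, -⟩
      · exact e
      · exact absurd (hl.trans hc) (lt_irrefl _)
    have e2 : b.1 x y = 0 := by
      rcases hb with ⟨hc, -⟩ | ⟨-, e⟩
      · exact absurd (hl.trans hc) (lt_irrefl _)
      · exact e
    rw [e1, e2]
    norm_num
  · rw [sp, if_neg (asymm hl)]
    have e1 : a.1 y x = 0 := by
      rcases ha with ⟨hc, -⟩ | ⟨-, e⟩
      · exact absurd (hl.trans hc) (lt_irrefl _)
      · exact e
    have e2 : b.1 y x = 1 := by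
      rcases hb with ⟨-, e⟩ | ⟨hc, -⟩
      · exact e
      · exact absurd (hl.trans hc) (lt_irrefl _)
    rw [e1, e2]
    norm_num

lemma Phi_comm (a b : UT n) : Phi a b = Phi b a := by
  refine Finset.sum_congr rfl (fun P _ => ?_)
  omega

lemma phi_toggle_lt (a b a' : UT n) (Q₁ Q₂ Q₃ : Fin (n+1) × Fin (n+1))
    (h12 : Q₁ ≠ Q₂) (h13 : Q₁ ≠ Q₃) (h23 : Q₂ ≠ Q₃)
    (t1 : ∀ p q : Fin (n+1), ((p,q) = Q₁ ∨ (p,q) = Q₂ ∨ (p,q) = Q₃) → a'.1 p q = 1 - a.1 p q)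
    (t2 : ∀ p q : Fin (n+1), (p,q) ≠ Q₁ → (p,q) ≠ Q₂ → (p,q) ≠ Q₃ → a'.1 p q = a.1 p q)
    (d1 : b.1 Q₁.1 Q₁.2 = 1 - a.1 Q₁.1 Q₁.2)
    (d2 : b.1 Q₂.1 Q₂.2 = 1 - a.1 Q₂.1 Q₂.2) :
    Phi a' b < Phi a b := by
  have hQ1 := t1 Q₁.1 Q₁.2 (Or.inl Prod.mk.eta)
  have hQ2 := t1 Q₂.1 Q₂.2 (Or.inr (Or.inl Prod.mk.eta))
  refine sum_lt_three (fun P => (a.1 P.1 P.2 - b.1 P.1 P.2).natAbs)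
    (fun P => (a'.1 P.1 P.2 - b.1 P.1 P.2).natAbs) Q₁ Q₂ Q₃ h12 h13 h23 ?_ ?_ ?_ ?_ ?_ ?_
  · intro p hp1 hp2 hp3
    rw [t2 p.1 p.2 (by rw [Prod.mk.eta]; exact hp1) (by rw [Prod.mk.eta]; exact hp2)
      (by rw [Prod.mk.eta]; exact hp3)]
  · rw [hQ1, d1]
    simp
  · rcases entry01 a Q₁.1 Q₁.2 with h | h <;> rw [d1, h] <;> norm_num
  · rw [hQ2, d2]
    simp
  · rcases entry01 a Q₂.1 Q₂.2 with h | h <;> rw [d2, h] <;> norm_num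
  · exact phi_entry_le a' b Q₃.1 Q₃.2

lemma reduce (a b : UT n) :
    ∀ m : ℕ, 3 ≤ m → ∀ c : ℕ → Fin (n+1),
    (∀ p, p < m → ∀ q, q < m → c p = c q → p = q) →
    (∀ k, k < m → Drel a b (c k) (c ((k+1) % m))) →
    ∃ a' b' : UT n, (UTAdj a a' ∨ a' = a) ∧ (UTAdj b b' ∨ b' = b) ∧ Phi a' b' < Phi a b := by
  intro m
  induction m using Nat.strong_induction_on with
  | _ m ih =>
    intro h3 c hinj hcyc
    have h1m : (0+1) % m = 1 := Nat.mod_eq_of_lt (by omega)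
    have h2m : (1+1) % m = 2 := Nat.mod_eq_of_lt (by omega)
    have hD01 : Drel a b (c 0) (c 1) := by
      have := hcyc 0 (by omega)
      rwa [h1m] at this
    have hD12 : Drel a b (c 1) (c 2) := by
      have := hcyc 1 (by omega)
      rwa [h2m] at this
    have h01 : c 0 ≠ c 1 := by
      intro h
      have := hinj 0 (by omega) 1 (by omega) h
      omega
    have h12 : c 1 ≠ c 2 := by
      intro h
      have := hinj 1 (by omega) 2 (by omega) h
      omega
    have h02 : c 0 ≠ c 2 := by
      intro h
      have := hinj 0 (by omega) 2 (by omega) h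
      omega
    rcases arc_total a h02 with hA02 | hA20
    · rcases arc_total b h02 with hB02 | hB20
      · -- reverse the 3-cycle c0 → c2 → c1 → c0 in b
        obtain ⟨b', hadj, t1, t2⟩ := reverse3 b hB02 hD12.2 hD01.2
        refine ⟨a, b', Or.inr rfl, Or.inl hadj, ?_⟩
        have key : Phi b' a < Phi b a := by
          refine phi_toggle_lt b a b' (sp (c 2) (c 1)) (sp (c 1) (c 0)) (sp (c 0) (c 2))
            (sp_ne h12.symm (Or.inl h12.symm) (Or.inl h02.symm))
            (sp_ne h12.symm (Or.inl h02.symm) (Or.inr h01.symm))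
            (sp_ne h01.symm (Or.inl h01.symm) (Or.inl h12))
            (fun p q h => t1 p q (by tauto)) (fun p q u1 u2 u3 => t2 p q u3 u1 u2)
            (D_sp (show Drel b a (c 2) (c 1) from ⟨hD12.2, hD12.1⟩))
            (D_sp (show Drel b a (c 1) (c 0) from ⟨hD01.2, hD01.1⟩))
        rw [Phi_comm a b', Phi_comm a b]
        exact key
      · -- Drel a b (c 0) (c 2) : shorten the cycle
        have hD02 : Drel a b (c 0) (c 2) := ⟨hA02, hB20⟩
        have hm3 : m ≠ 3 := by
          intro hh
          have hthis := hcyc 2 (by omega)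
          rw [hh] at hthis
          norm_num at hthis
          exact arc_asymm a hA02 hthis.1
        refine ih (m-1) (by omega) (by omega) (fun k => if k = 0 then c 0 else c (k+1)) ?_ ?_
        · intro p hp q hq hpq
          by_cases hp0 : p = 0 <;> by_cases hq0 : q = 0
          · rw [hp0, hq0]
          · rw [if_pos hp0, if_neg hq0] at hpq
            have := hinj 0 (by omega) (q+1) (by omega) hpq
            omega
          · rw [if_neg hp0, if_pos hq0] at hpq
            have := hinj (p+1) (by omega) 0 (by omega) hpq
            omega
          · rw [if_neg hp0, if_neg hq0] at hpq
            have := hinj (p+1) (by omega) (q+1) (by omega) hpq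
            omega
        · intro k hk
          by_cases hk0 : k = 0
          · subst hk0
            rw [show (0+1) % (m-1) = 1 from Nat.mod_eq_of_lt (by omega)]
            rw [if_pos rfl, if_neg one_ne_zero]
            exact hD02
          · by_cases hklast : k + 1 = m - 1
            · rw [show (k+1) % (m-1) = 0 from by rw [hklast, Nat.mod_self]]
              rw [if_neg hk0, if_pos rfl]
              have := hcyc (k+1) (by omega)
              rw [show (k+1+1) % m = 0 from by
                rw [show k+1+1 = m from by omega, Nat.mod_self]] at this
              exact this
            · rw [show (k+1) % (m-1) = k+1 from Nat.mod_eq_of_lt (by omega)]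
              rw [if_neg hk0, if_neg (Nat.succ_ne_zero k)]
              have := hcyc (k+1) (by omega)
              rw [show (k+1+1) % m = k+1+1 from Nat.mod_eq_of_lt (by omega)] at this
              exact this
    · -- reverse the 3-cycle c0 → c1 → c2 → c0 in a
      obtain ⟨a', hadj, t1, t2⟩ := reverse3 a hD01.1 hD12.1 hA20
      refine ⟨a', b, Or.inl hadj, Or.inr rfl, ?_⟩
      exact phi_toggle_lt a b a' (sp (c 0) (c 1)) (sp (c 1) (c 2)) (sp (c 2) (c 0))
        (sp_ne h01 (Or.inl h01) (Or.inl h02))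
        (sp_ne h01 (Or.inl h02) (Or.inr h12))
        (sp_ne h12 (Or.inl h12) (Or.inl h01.symm))
        t1 t2 (D_sp hD01) (D_sp hD12)

lemma connect (α : Fin (n+1) → ℤ) :
    ∀ N : ℕ, ∀ a b : {x : UT n // UTweight x = α}, Phi a.1 b.1 = N →
    Relation.ReflTransGen (fun x y : {x : UT n // UTweight x = α} => UTAdj x.1 y.1) a b := by
  intro N
  induction N using Nat.strong_induction_on with
  | _ N ih =>
    intro a b hN
    by_cases h0 : Phi a.1 b.1 = 0
    · rw [show a = b from Subtype.ext (Phi_zero h0)]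
    · have hne : a.1.1 ≠ b.1.1 := by
        intro h
        apply h0
        refine Finset.sum_eq_zero (fun P _ => ?_)
        rw [h]
        simp
      have hw : UTweight a.1 = UTweight b.1 := a.2.trans b.2.symm
      obtain ⟨m, c, h3, hinj, hcyc⟩ := exists_D_cycle a.1 b.1 hw hne
      obtain ⟨a', b', ha', hb', hphi⟩ := reduce a.1 b.1 m h3 c hinj hcyc
      have hwa' : UTweight a' = α := by
        rcases ha' with h | h
        · rw [UTAdj.weight_eq h, a.2]
        · rw [h, a.2]
      have hwb' : UTweight b' = α := by
        rcases hb' with h | h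
        · rw [UTAdj.weight_eq h, b.2]
        · rw [h, b.2]
      have step1 : Relation.ReflTransGen
          (fun x y : {x : UT n // UTweight x = α} => UTAdj x.1 y.1) a ⟨a', hwa'⟩ := by
        rcases ha' with h | h
        · exact Relation.ReflTransGen.single h
        · rw [show (⟨a', hwa'⟩ : {x : UT n // UTweight x = α}) = a from Subtype.ext h]
      have step3 : Relation.ReflTransGen
          (fun x y : {x : UT n // UTweight x = α} => UTAdj x.1 y.1) ⟨b', hwb'⟩ b := by
        rcases hb' with h | h
        · exact Relation.ReflTransGen.single h.symm'
        · rw [show (⟨b', hwb'⟩ : {x : UT n // UTweight x = α}) = b from Subtype.ext h]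
      have step2 := ih (Phi a' b') (hN ▸ hphi) ⟨a', hwa'⟩ ⟨b', hwb'⟩ rfl
      exact (step1.trans step2).trans step3


/-- All weight subgraphs `G(α)` with `α ∈ ω_n` are connected; moreover, if both `α` and
the tuple `α'` obtained from `α` by replacing `α s` by `α s + 1` and `α t` by `α t - 1`
lie in `ω_n`, then some array `a` of weight `α` satisfies `a_{s,t} = 0`, and changing
this entry to `1` produces an array of weight `α'`. -/
theorem weight_subgraph_connected (n : ℕ) (hn : 1 ≤ n)
    (α : Fin (n + 1) → ℤ) (hα : InOmega α) :
    (∀ a b : {a : UT n // UTweight a = α},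
      Relation.ReflTransGen
        (fun x y : {a : UT n // UTweight a = α} => UTAdj x.1 y.1) a b) ∧
    (∀ s t : Fin (n + 1), s < t →
      InOmega (Function.update (Function.update α s (α s + 1)) t (α t - 1)) →
      ∃ a : UT n, UTweight a = α ∧ a.1 s t = 0 ∧
        UTweight (UTset a s t) =
          Function.update (Function.update α s (α s + 1)) t (α t - 1)) :=
  ⟨fun a b => connect α (Phi a.1 b.1) a b rfl,
   fun s t hst hα' => part2 α hα s t hst hα'⟩
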